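/- Let γ > 0, let N, R ≥ 1 be natural numbers, set h = 1/N, and let J : {1, …, R} → [0, ∞) satisfy (1/R³) · ∑_{j=1}^{R} J(j)·j² = 1. Then for every natural number k ≥ 1 the discrete eigenvalue λ_k^h = (4γ/(h²R³)) · ∑_{j=1}^{R} J(j)·sin²(π·k·h·j/2) satisfies 0 ≤ γ·π²·k² − λ_k^h ≤ (γ·π⁴/12) · k⁴ · h² · (1/R³) · ∑_{j=1}^{R} J(j)·j⁴. In particular, if additionally (1/R³) · ∑_{j=1}^{R} J(j)·j⁴ ≤ R² and R ≤ h^{-ζ} for some 0 < ζ < 1/2, then 0 ≤ γ·π²·k² − λ_k^h ≤ (γ·π⁴/12) · k⁴ · h^{2−2ζ}. (Convergence of eigenvalues, Lemma 2.2 of the paper.) -/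

import Mathlib

open Real Finset

lemma aux_hasDerivAt (t : ℝ) :
    HasDerivAt (fun t : ℝ => Real.sin t - t + t ^ 3 / 6) (Real.cos t - 1 + 3 * t ^ 2 / 6) t := by
  have h1 := (Real.hasDerivAt_sin t).sub (hasDerivAt_id t)
  have h2 := (hasDerivAt_pow 3 t).div_const 6
  have h3 : HasDerivAt (fun t : ℝ => Real.sin t - t + t ^ 3 / 6)
      (Real.cos t - 1 + ((3:ℕ):ℝ) * t ^ (3 - 1) / 6) t := h1.add h2
  convert h3 using 1; norm_num

lemma aux_sub_cube_le_sin {t : ℝ} (ht : 0 ≤ t) : t - t ^ 3 / 6 ≤ Real.sin t := by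
  have hmono : Monotone (fun t : ℝ => Real.sin t - t + t ^ 3 / 6) := by
    apply monotone_of_deriv_nonneg
    · exact fun x => (aux_hasDerivAt x).differentiableAt
    · intro x
      rw [(aux_hasDerivAt x).deriv]
      nlinarith [Real.one_sub_sq_div_two_le_cos (x := x)]
  have h0 := hmono ht
  simp only [Real.sin_zero] at h0
  nlinarith [h0]

lemma aux_sq_sub_le_sin_sq {x : ℝ} (hx : 0 ≤ x) :
    x ^ 2 - x ^ 4 / 3 ≤ Real.sin x ^ 2 := by
  rcases le_or_gt 3 (x ^ 2) with h3 | h3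
  · nlinarith [sq_nonneg (Real.sin x)]
  · have h6 : 0 ≤ x - x ^ 3 / 6 := by nlinarith
    have hs := aux_sub_cube_le_sin hx
    nlinarith [mul_nonneg h6 h6, sq_nonneg x, sq_nonneg (x ^ 3),
      mul_nonneg (sub_nonneg.2 hs) (by linarith : (0:ℝ) ≤ Real.sin x + (x - x ^ 3 / 6))]

theorem eigenvalue_convergence
    (γ : ℝ) (hγ : 0 < γ) (N R : ℕ) (hN : 1 ≤ N) (hR : 1 ≤ R)
    (h : ℝ) (hh : h = 1 / (N : ℝ))
    (J : ℕ → ℝ) (hJ : ∀ j ∈ Finset.Icc 1 R, 0 ≤ J j)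
    (hnorm : (1 / (R : ℝ) ^ 3) * ∑ j ∈ Finset.Icc 1 R, J j * (j : ℝ) ^ 2 = 1)
    (k : ℕ) (hk : 1 ≤ k) :
    (0 ≤ γ * π ^ 2 * (k : ℝ) ^ 2 -
        (4 * γ / (h ^ 2 * (R : ℝ) ^ 3)) *
          ∑ j ∈ Finset.Icc 1 R, J j * Real.sin (π * k * h * j / 2) ^ 2 ∧
      γ * π ^ 2 * (k : ℝ) ^ 2 -
          (4 * γ / (h ^ 2 * (R : ℝ) ^ 3)) *
            ∑ j ∈ Finset.Icc 1 R, J j * Real.sin (π * k * h * j / 2) ^ 2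
        ≤ (γ * π ^ 4 / 12) * (k : ℝ) ^ 4 * h ^ 2 *
            ((1 / (R : ℝ) ^ 3) * ∑ j ∈ Finset.Icc 1 R, J j * (j : ℝ) ^ 4)) ∧
    ∀ ζ : ℝ, 0 < ζ → ζ < 1 / 2 →
      (1 / (R : ℝ) ^ 3) * (∑ j ∈ Finset.Icc 1 R, J j * (j : ℝ) ^ 4) ≤ (R : ℝ) ^ 2 →
      (R : ℝ) ≤ h ^ (-ζ) →
      0 ≤ γ * π ^ 2 * (k : ℝ) ^ 2 -
          (4 * γ / (h ^ 2 * (R : ℝ) ^ 3)) *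
            ∑ j ∈ Finset.Icc 1 R, J j * Real.sin (π * k * h * j / 2) ^ 2 ∧
      γ * π ^ 2 * (k : ℝ) ^ 2 -
          (4 * γ / (h ^ 2 * (R : ℝ) ^ 3)) *
            ∑ j ∈ Finset.Icc 1 R, J j * Real.sin (π * k * h * j / 2) ^ 2
        ≤ (γ * π ^ 4 / 12) * (k : ℝ) ^ 4 * h ^ (2 - 2 * ζ) := by
  have hN0 : (0:ℝ) < N := by exact_mod_cast hN
  have hh0 : 0 < h := by rw [hh]; positivity
  have hR0 : (0:ℝ) < R := by exact_mod_cast hR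
  have hπ := Real.pi_pos
  set S2 : ℝ := ∑ j ∈ Finset.Icc 1 R, J j * (j : ℝ) ^ 2 with hS2
  set S4 : ℝ := ∑ j ∈ Finset.Icc 1 R, J j * (j : ℝ) ^ 4 with hS4
  set Ss : ℝ := ∑ j ∈ Finset.Icc 1 R, J j * Real.sin (π * k * h * j / 2) ^ 2 with hSs
  have hS2R : S2 = (R : ℝ) ^ 3 := by
    field_simp at hnorm; linarith
  have hS4nn : 0 ≤ S4 := Finset.sum_nonneg fun j hj =>
    mul_nonneg (hJ j hj) (by positivity)
  have hup : Ss ≤ (π ^ 2 * (k:ℝ) ^ 2 * h ^ 2 / 4) * S2 := by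
    rw [hSs, hS2, Finset.mul_sum]
    apply Finset.sum_le_sum
    intro j hj
    calc J j * Real.sin (π * k * h * j / 2) ^ 2
        ≤ J j * (π * k * h * j / 2) ^ 2 :=
          mul_le_mul_of_nonneg_left Real.sin_sq_le_sq (hJ j hj)
      _ = π ^ 2 * (k:ℝ) ^ 2 * h ^ 2 / 4 * (J j * (j:ℝ) ^ 2) := by ring
  have hlo : (π ^ 2 * (k:ℝ) ^ 2 * h ^ 2 / 4) * S2
      - (π ^ 4 * (k:ℝ) ^ 4 * h ^ 4 / 48) * S4 ≤ Ss := by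
    rw [hSs, hS2, hS4, Finset.mul_sum, Finset.mul_sum, ← Finset.sum_sub_distrib]
    apply Finset.sum_le_sum
    intro j hj
    have hx : (0:ℝ) ≤ π * k * h * j / 2 := by positivity
    calc π ^ 2 * (k:ℝ) ^ 2 * h ^ 2 / 4 * (J j * (j:ℝ) ^ 2)
          - π ^ 4 * (k:ℝ) ^ 4 * h ^ 4 / 48 * (J j * (j:ℝ) ^ 4)
        = J j * ((π * k * h * j / 2) ^ 2 - (π * k * h * j / 2) ^ 4 / 3) := by ring
      _ ≤ J j * Real.sin (π * k * h * j / 2) ^ 2 :=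
          mul_le_mul_of_nonneg_left (aux_sq_sub_le_sin_sq hx) (hJ j hj)
  set A : ℝ := 4 * γ / (h ^ 2 * (R : ℝ) ^ 3) with hA
  have hA0 : 0 < A := by rw [hA]; positivity
  have heq1 : A * ((π ^ 2 * (k:ℝ) ^ 2 * h ^ 2 / 4) * (R:ℝ) ^ 3) = γ * π ^ 2 * (k:ℝ) ^ 2 := by
    rw [hA]; field_simp
  have heq2 : A * ((π ^ 4 * (k:ℝ) ^ 4 * h ^ 4 / 48) * S4)
      = (γ * π ^ 4 / 12) * (k:ℝ) ^ 4 * h ^ 2 * ((1 / (R:ℝ) ^ 3) * S4) := by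
    rw [hA]; field_simp; ring
  have key1 : 0 ≤ γ * π ^ 2 * (k:ℝ) ^ 2 - A * Ss := by
    have h1 : A * Ss ≤ A * ((π ^ 2 * (k:ℝ) ^ 2 * h ^ 2 / 4) * (R:ℝ) ^ 3) :=
      mul_le_mul_of_nonneg_left (by rw [← hS2R]; exact hup) hA0.le
    rw [heq1] at h1; linarith
  have key2 : γ * π ^ 2 * (k:ℝ) ^ 2 - A * Ss
      ≤ (γ * π ^ 4 / 12) * (k:ℝ) ^ 4 * h ^ 2 * ((1 / (R:ℝ) ^ 3) * S4) := by
    have h1 : A * ((π ^ 2 * (k:ℝ) ^ 2 * h ^ 2 / 4) * (R:ℝ) ^ 3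
        - (π ^ 4 * (k:ℝ) ^ 4 * h ^ 4 / 48) * S4) ≤ A * Ss :=
      mul_le_mul_of_nonneg_left (by rw [← hS2R]; exact hlo) hA0.le
    rw [mul_sub, heq1, heq2] at h1; linarith
  refine ⟨⟨key1, key2⟩, ?_⟩
  intro ζ hζ0 hζ half hRb
  refine ⟨key1, key2.trans ?_⟩
  have h3 : ((h ^ (-ζ) : ℝ)) ^ (2:ℕ) = h ^ (-(2 * ζ)) := by
    rw [← Real.rpow_natCast (h ^ (-ζ)) 2, ← Real.rpow_mul hh0.le]
    congr 1; push_cast; ring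
  have h2 : (R:ℝ) ^ 2 ≤ h ^ (-(2 * ζ)) := by
    rw [← h3]; exact pow_le_pow_left₀ hR0.le hRb 2
  have h4 : h ^ 2 * ((1 / (R:ℝ) ^ 3) * S4) ≤ h ^ 2 * h ^ (-(2 * ζ)) :=
    mul_le_mul_of_nonneg_left (half.trans h2) (by positivity)
  have h5 : h ^ 2 * h ^ (-(2 * ζ)) = h ^ (2 - 2 * ζ) := by
    rw [← Real.rpow_natCast h 2, ← Real.rpow_add hh0]
    norm_num [sub_eq_add_neg]
  have hc : (0:ℝ) ≤ γ * π ^ 4 / 12 * (k:ℝ) ^ 4 := by positivity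
  calc (γ * π ^ 4 / 12) * (k:ℝ) ^ 4 * h ^ 2 * ((1 / (R:ℝ) ^ 3) * S4)
      = (γ * π ^ 4 / 12 * (k:ℝ) ^ 4) * (h ^ 2 * ((1 / (R:ℝ) ^ 3) * S4)) := by ring
    _ ≤ (γ * π ^ 4 / 12 * (k:ℝ) ^ 4) * (h ^ 2 * h ^ (-(2 * ζ))) :=
        mul_le_mul_of_nonneg_left h4 hc
    _ = (γ * π ^ 4 / 12) * (k:ℝ) ^ 4 * h ^ (2 - 2 * ζ) := by rw [h5]
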